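/- Under the same hypotheses (|x₁| ≤ C₀(ε + x₂²), a² ≤ C₁ε, (x₁ ± a)² + x₂² ≥ c(ε + x₂²)), there is a constant C with |ζ(x)| ≤ C √ε, where ζ(x) = (1/2) ln(1 + 4a x₁/((x₁−a)² + x₂²)). -/

import Mathlib

open Real

lemma abs_log_one_add_le (u : ℝ) (hu : |u| ≤ 1 / 2) :
    |Real.log (1 + u)| ≤ 2 * |u| := by
  have h1 : -(1/2) ≤ u := (abs_le.mp hu).1
  have h2 : u ≤ 1/2 := (abs_le.mp hu).2
  have hpos : (0:ℝ) < 1 + u := by linarith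
  rcases le_or_gt 0 u with h | h
  · rw [abs_of_nonneg h, abs_of_nonneg (Real.log_nonneg (by linarith))]
    have := Real.log_le_sub_one_of_pos hpos
    linarith
  · rw [abs_of_neg h, abs_of_nonpos (Real.log_nonpos (by linarith) (by linarith))]
    have hinv : (0:ℝ) < (1 + u)⁻¹ := by positivity
    have := Real.log_le_sub_one_of_pos hinv
    rw [Real.log_inv] at this
    have h3 : (1 + u)⁻¹ - 1 = -u / (1 + u) := by field_simp; ring
    have h4 : -u / (1 + u) ≤ 2 * -u := by
      rw [div_le_iff₀ hpos]
      nlinarith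
    linarith

/-- In the narrow region, `|ζ(x)| ≤ C√ε`, where
`ζ(x) = (1/2) ln(1 + 4a x₁/((x₁−a)² + x₂²))`. -/
theorem stmt16 (C₀ C₁ c : ℝ) (hC₀ : 0 < C₀) (hC₁ : 0 < C₁) (hc : 0 < c) :
    ∃ C > (0:ℝ), ∀ ε a x₁ x₂ : ℝ, 0 < ε → 0 < a →
      |x₁| ≤ C₀ * (ε + x₂ ^ 2) → a ^ 2 ≤ C₁ * ε →
      c * (ε + x₂ ^ 2) ≤ (x₁ + a) ^ 2 + x₂ ^ 2 →
      c * (ε + x₂ ^ 2) ≤ (x₁ - a) ^ 2 + x₂ ^ 2 →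
      4 * a * |x₁| / ((x₁ - a) ^ 2 + x₂ ^ 2) ≤ 1 / 2 →
      |(1 / 2) * Real.log (1 + 4 * a * x₁ / ((x₁ - a) ^ 2 + x₂ ^ 2))|
        ≤ C * Real.sqrt ε := by
  refine ⟨4 * C₀ * Real.sqrt C₁ / c, by positivity, ?_⟩
  intro ε a x₁ x₂ hε ha hx₁ ha2 _ hD h7
  set D := (x₁ - a) ^ 2 + x₂ ^ 2 with hDdef
  have hεx : 0 < ε + x₂ ^ 2 := by positivity
  have hDpos : 0 < D := lt_of_lt_of_le (by positivity) hD
  set u := 4 * a * x₁ / D with hu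
  have habsu : |u| = 4 * a * |x₁| / D := by
    rw [hu, abs_div, abs_of_pos hDpos, abs_mul, abs_of_pos (by positivity : (0:ℝ) < 4 * a)]
  have hu2 : |u| ≤ 1 / 2 := habsu ▸ h7
  have hlog := abs_log_one_add_le u hu2
  have ha' : a ≤ Real.sqrt C₁ * Real.sqrt ε := by
    rw [← Real.sqrt_mul hC₁.le]
    have := Real.sqrt_le_sqrt ha2
    rwa [Real.sqrt_sq ha.le] at this
  -- bound |u|
  have hub : |u| ≤ 4 * C₀ * Real.sqrt C₁ / c * Real.sqrt ε := by
    rw [habsu, div_le_iff₀ hDpos]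
    have hDc : c * (ε + x₂ ^ 2) ≤ D := hD
    have hsqε : 0 < Real.sqrt ε := Real.sqrt_pos.mpr hε
    have hsqC : 0 < Real.sqrt C₁ := Real.sqrt_pos.mpr hC₁
    have key : 4 * a * |x₁| ≤ 4 * C₀ * Real.sqrt C₁ * Real.sqrt ε / c * (c * (ε + x₂ ^ 2)) := by
      have h1 : 4 * a * |x₁| ≤ 4 * (Real.sqrt C₁ * Real.sqrt ε) * (C₀ * (ε + x₂ ^ 2)) := by
        have := abs_nonneg x₁
        nlinarith
      have h2 : 4 * C₀ * Real.sqrt C₁ * Real.sqrt ε / c * (c * (ε + x₂ ^ 2))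
          = 4 * (Real.sqrt C₁ * Real.sqrt ε) * (C₀ * (ε + x₂ ^ 2)) := by
        field_simp
      linarith [h2 ▸ h1]
    calc 4 * a * |x₁| ≤ 4 * C₀ * Real.sqrt C₁ * Real.sqrt ε / c * (c * (ε + x₂ ^ 2)) := key
      _ ≤ 4 * C₀ * Real.sqrt C₁ / c * Real.sqrt ε * D := by
        have : 4 * C₀ * Real.sqrt C₁ * Real.sqrt ε / c = 4 * C₀ * Real.sqrt C₁ / c * Real.sqrt ε := by
          ring
        rw [this]
        exact mul_le_mul_of_nonneg_left hDc (by positivity)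
  calc |(1 / 2) * Real.log (1 + u)| = (1/2) * |Real.log (1 + u)| := by
        rw [abs_mul, abs_of_pos (by norm_num : (0:ℝ) < 1/2)]
    _ ≤ (1/2) * (2 * |u|) := by linarith [abs_nonneg (Real.log (1+u)), hlog]
    _ = |u| := by ring
    _ ≤ 4 * C₀ * Real.sqrt C₁ / c * Real.sqrt ε := hub
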